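/- Let H be a Hermitian n×n complex matrix and A an arbitrary n×n complex matrix. If [H, [H, A]] = 0, then [H, A] = 0. (Finite-dimensional form of Lemma 3 of the paper, proved via the Hilbert–Schmidt norm.) -/
import Mathlib

open Matrix


/-- finite-dimensional Lemma 3 of the paper: For a Hermitian
matrix `H` and an arbitrary matrix `A`, `[H, [H, A]] = 0` implies `[H, A] = 0`. -/
theorem double_commutator_vanishing {n : ℕ} (hn : 1 ≤ n)
    (H A : Matrix (Fin n) (Fin n) ℂ) (hH : H.IsHermitian)
    (h : H * (H * A - A * H) - (H * A - A * H) * H = 0) :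
    H * A - A * H = 0 := by
  set C := H * A - A * H with hC
  have hc : H * C = C * H := sub_eq_zero.mp h
  have hCH : Cᴴ = Aᴴ * H - H * Aᴴ := by
    rw [hC, Matrix.conjTranspose_sub, Matrix.conjTranspose_mul,
      Matrix.conjTranspose_mul, hH.eq]
  have key : (Cᴴ * C).trace = 0 := by
    have : Cᴴ * C = Aᴴ * (H * C) - (H * (Aᴴ * C)) := by
      rw [hCH]; noncomm_ring
    rw [this, Matrix.trace_sub, Matrix.trace_mul_comm H (Aᴴ * C)]
    rw [show Aᴴ * C * H = Aᴴ * (C * H) by noncomm_ring, ← hc]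
    ring
  have hsum : ∑ i, ∑ j, star (C j i) * C j i = 0 := by
    have e : (Cᴴ * C).trace = ∑ i, ∑ j, star (C j i) * C j i := by
      simp [Matrix.trace, Matrix.diag, Matrix.mul_apply, Matrix.conjTranspose_apply]
    rw [← e, key]
  ext i j
  have hnonneg : ∀ p : Fin n × Fin n, (0:ℝ) ≤ Complex.normSq (C p.2 p.1) :=
    fun p => Complex.normSq_nonneg _
  have hsum' : ∑ p : Fin n × Fin n, Complex.normSq (C p.2 p.1) = 0 := by
    have := congrArg Complex.re hsum
    simpa [Fintype.sum_prod_type, Complex.mul_conj', Complex.mul_conj,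
      Complex.normSq] using this
  have := (Finset.sum_eq_zero_iff_of_nonneg (fun p _ => hnonneg p)).mp hsum' (j, i)
    (Finset.mem_univ _)
  simpa [Complex.normSq_eq_zero] using this
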